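/- Let G be a directed graph with distinguished nodes s and t such that every node is reachable from s and t is reachable from every node, and let T be a spanning in-tree of G rooted at t (for every node v, the unique T-path from v to t exists). Call the edges of G that are not edges of T sidetrack edges. Then the map assigning to each s-to-t path of G its subsequence of sidetrack edges is a bijection between the s-to-t paths of G and the valid sequences of sidetrack edges, where a sequence (u_1, v_1), (u_2, v_2), …, (u_k, v_k) of sidetrack edges (including the empty sequence) is valid if u_1 lies on the T-path from s to t and, for every i ∈ {1, …, k−1}, the node u_{i+1} lies on the T-path from v_i to t. -/

import Mathlib

open scoped Classical

/-- Paths in a directed graph given by edge source and target maps: a path from `u`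
to `v` is a list of edges in which the target of each edge is the source of the next,
the first edge (if any) starts at `u`, and the path ends at `v` (the empty list is a
path from `v` to `v`). -/
inductive IsPath {V E : Type*} (src tgt : E → V) : V → V → List E → Prop
  | nil (v : V) : IsPath src tgt v v []
  | cons {u v z : V} {e : E} {P : List E} :
      src e = u → tgt e = v → IsPath src tgt v z P → IsPath src tgt u z (e :: P)

/-- `u` is reachable from `v` in the subgraph with edge set `TE`: there is a path from
`v` to `u` using only edges of `TE`.  (For a spanning in-tree `TE` rooted at `t`, this
holds exactly when `u` lies on the tree path from `v` to `t`.) -/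
def TReach {V E : Type*} (src tgt : E → V) (TE : Set E) (v u : V) : Prop :=
  ∃ P, IsPath src tgt v u P ∧ ∀ e ∈ P, e ∈ TE

/-- A sequence of sidetrack edges (edges not in `TE`) is valid if the source of its
first edge is reachable from `s` in the tree, and the source of each subsequent edge
is reachable in the tree from the target of the previous edge. -/
def ValidSeq {V E : Type*} (src tgt : E → V) (TE : Set E) (s : V) (L : List E) : Prop :=
  (∀ e ∈ L, e ∉ TE) ∧
  (∀ e, L.head? = some e → TReach src tgt TE s (src e)) ∧
  List.Chain' (fun e e' => TReach src tgt TE (tgt e) (src e')) L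

section Aux
variable {V E : Type*} {src tgt : E → V} {TE : Set E}

lemma isPath_append {u v w : V} {P Q : List E} (hP : IsPath src tgt u v P)
    (hQ : IsPath src tgt v w Q) : IsPath src tgt u w (P ++ Q) := by
  induction hP generalizing Q w with
  | nil => simpa using hQ
  | cons h1 h2 _ ih => exact .cons h1 h2 (ih hQ)

lemma treach_refl (v : V) : TReach src tgt TE v v := ⟨[], .nil v, by simp⟩

lemma treach_cons {e : E} {w : V} (he : e ∈ TE) (h : TReach src tgt TE (tgt e) w) :
    TReach src tgt TE (src e) w := by
  obtain ⟨P, hP, hm⟩ := h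
  exact ⟨e :: P, .cons rfl rfl hP, by simpa using ⟨he, hm⟩⟩

lemma split_first {u w : V} {P : List E} (h : IsPath src tgt u w P) :
    (∀ e ∈ P, e ∈ TE) ∨
    ∃ Q e R, P = Q ++ e :: R ∧ (∀ f ∈ Q, f ∈ TE) ∧ e ∉ TE ∧
      IsPath src tgt u (src e) Q ∧ IsPath src tgt (tgt e) w R := by
  induction h with
  | nil => left; simp
  | @cons u v z e P h1 h2 hP ih =>
    by_cases he : e ∈ TE
    · rcases ih with hall | ⟨Q, f, R, hsplit, hQ, hf, hQp, hRp⟩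
      · left; simpa using ⟨he, hall⟩
      · right
        exact ⟨e :: Q, f, R, by simp [hsplit], by simpa using ⟨he, hQ⟩, hf,
          .cons h1 h2 hQp, hRp⟩
    · right
      exact ⟨[], e, P, rfl, by simp, he, h1 ▸ .nil _, h2 ▸ hP⟩

lemma filter_eq_nil_of_all {P : List E} (h : ∀ e ∈ P, e ∈ TE) :
    P.filter (fun e => e ∉ TE) = [] := by
  simp only [List.filter_eq_nil_iff, decide_eq_true_eq, not_not]
  exact h

end Aux

section Main
variable {V E : Type*} {src tgt : E → V} {TE : Set E} {t : V}

lemma valid_of_path {v z : V} {P : List E} (h : IsPath src tgt v z P) :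
    ValidSeq src tgt TE v (P.filter fun e => e ∉ TE) := by
  induction h with
  | nil => exact ⟨by simp, by simp, List.isChain_nil⟩
  | @cons u v z e P h1 h2 hP ih =>
    obtain ⟨ihm, ihh, ihc⟩ := ih
    by_cases he : e ∈ TE
    · rw [List.filter_cons_of_neg (by simpa using he)]
      exact ⟨ihm, fun f hf => h1 ▸ treach_cons he (h2 ▸ ihh f hf), ihc⟩
    · rw [List.filter_cons_of_pos (by simpa using he)]
      refine ⟨?_, ?_, ?_⟩
      · intro f hf
        rcases List.mem_cons.1 hf with rfl | hf
        · exact he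
        · exact ihm f hf
      · intro f hf
        simp only [List.head?_cons, Option.some.injEq] at hf
        subst hf
        exact h1 ▸ treach_refl _
      · simp only [List.Chain', List.isChain_cons]
        exact ⟨fun f hf => h2 ▸ ihh f hf, ihc⟩
  end Main

section Main2
variable {V E : Type*} {src tgt : E → V} {TE : Set E} {t : V}

lemma filter_split {Q R : List E} {e : E} (hQ : ∀ f ∈ Q, f ∈ TE) (he : e ∉ TE) :
    (Q ++ e :: R).filter (fun f => f ∉ TE) = e :: R.filter (fun f => f ∉ TE) := by
  rw [List.filter_append, filter_eq_nil_of_all hQ, List.nil_append,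
    List.filter_cons_of_pos (by simpa using he)]

lemma path_inj (htree : ∀ v, ∃! P, IsPath src tgt v t P ∧ ∀ e ∈ P, e ∈ TE) :
    ∀ (L : List E) (v : V) (P₁ P₂ : List E), IsPath src tgt v t P₁ → IsPath src tgt v t P₂ →
      P₁.filter (fun e => e ∉ TE) = L → P₂.filter (fun e => e ∉ TE) = L → P₁ = P₂ := by
  intro L
  induction L with
  | nil =>
    intro v P₁ P₂ h1 h2 hf1 hf2
    have t1 : ∀ e ∈ P₁, e ∈ TE := by
      simpa using List.filter_eq_nil_iff.1 hf1
    have t2 : ∀ e ∈ P₂, e ∈ TE := by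
      simpa using List.filter_eq_nil_iff.1 hf2
    exact (htree v).unique ⟨h1, t1⟩ ⟨h2, t2⟩
  | cons e L ih =>
    intro v P₁ P₂ h1 h2 hf1 hf2
    rcases split_first (TE := TE) h1 with hall | ⟨Q₁, f₁, R₁, rfl, hQ₁, hfe₁, hQp₁, hRp₁⟩
    · rw [filter_eq_nil_of_all hall] at hf1; exact absurd hf1 (by simp)
    rcases split_first (TE := TE) h2 with hall | ⟨Q₂, f₂, R₂, rfl, hQ₂, hfe₂, hQp₂, hRp₂⟩
    · rw [filter_eq_nil_of_all hall] at hf2; exact absurd hf2 (by simp)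
    rw [filter_split hQ₁ hfe₁] at hf1
    rw [filter_split hQ₂ hfe₂] at hf2
    injection hf1 with hfe1 hR1
    injection hf2 with hfe2 hR2
    subst hfe1; subst hfe2
    obtain ⟨S, ⟨hSp, hSm⟩, -⟩ := htree (src f₂)
    have e1 : Q₁ ++ _ = Q₂ ++ _ :=
      ((htree v).unique ⟨isPath_append hQp₁ hSp, fun f hf => by
          rcases List.mem_append.1 hf with h | h
          exacts [hQ₁ f h, hSm f h]⟩
        ⟨isPath_append hQp₂ hSp, fun f hf => by
          rcases List.mem_append.1 hf with h | h
          exacts [hQ₂ f h, hSm f h]⟩)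
    have hQeq : Q₁ = Q₂ := List.append_cancel_right e1
    have hReq : R₁ = R₂ := ih (tgt f₂) R₁ R₂ hRp₁ hRp₂ hR1 hR2
    rw [hQeq, hReq]

lemma path_surj (htree : ∀ v, ∃! P, IsPath src tgt v t P ∧ ∀ e ∈ P, e ∈ TE) :
    ∀ (L : List E) (v : V), ValidSeq src tgt TE v L →
      ∃ P, IsPath src tgt v t P ∧ P.filter (fun e => e ∉ TE) = L := by
  intro L
  induction L with
  | nil =>
    intro v _
    obtain ⟨P, ⟨hp, hm⟩, -⟩ := htree v
    exact ⟨P, hp, filter_eq_nil_of_all hm⟩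
  | cons e L ih =>
    rintro v ⟨hmem, hhead, hchain⟩
    obtain ⟨Q, hQp, hQm⟩ := hhead e rfl
    simp only [List.Chain', List.isChain_cons] at hchain
    obtain ⟨P, hP, hPf⟩ := ih (tgt e) ⟨fun f hf => hmem f (List.mem_cons_of_mem _ hf),
      fun f hf => hchain.1 f hf, hchain.2⟩
    refine ⟨Q ++ e :: P, isPath_append hQp (.cons rfl rfl hP), ?_⟩
    rw [filter_split hQm (hmem e List.mem_cons_self), hPf]

end Main2

/-- Let `G` be a directed graph with distinguished nodes `s`, `t`,
every node reachable from `s` and `t` reachable from every node, and let `TE` be (the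
edge set of) a spanning in-tree rooted at `t` (every node has a unique tree path to
`t`).  Then mapping an `s`-to-`t` path to its subsequence of sidetrack edges is a
bijection between the `s`-to-`t` paths of `G` and the valid sequences of sidetrack
edges. -/
theorem stmt11 {V E : Type*} (src tgt : E → V) (s t : V)
    (hs : ∀ v, ∃ P, IsPath src tgt s v P)
    (ht : ∀ v, ∃ P, IsPath src tgt v t P)
    (TE : Set E)
    (htree : ∀ v, ∃! P, IsPath src tgt v t P ∧ ∀ e ∈ P, e ∈ TE) :
    (∀ P, IsPath src tgt s t P → ValidSeq src tgt TE s (P.filter fun e => e ∉ TE)) ∧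
    (∀ P₁ P₂, IsPath src tgt s t P₁ → IsPath src tgt s t P₂ →
        P₁.filter (fun e => e ∉ TE) = P₂.filter (fun e => e ∉ TE) → P₁ = P₂) ∧
    (∀ L, ValidSeq src tgt TE s L →
        ∃ P, IsPath src tgt s t P ∧ P.filter (fun e => e ∉ TE) = L) := by
  exact ⟨fun P hP => valid_of_path hP,
    fun P₁ P₂ h1 h2 hf => path_inj htree _ s P₁ P₂ h1 h2 hf rfl,
    fun L hL => path_surj htree L s hL⟩
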